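/- Let M be a matroid, Q, R disjoint subsets of E(M) with k := κ_M(Q,R), and let (U, E(M)−U) be a partition of E(M) with Q ⊆ U, R ⊆ E(M)−U and λ_M(U) ≤ k. If e ∈ E(M) − (U ∪ R) satisfies κ_{M/e}(Q,R) < k, then κ_{M/e}(U,R) < κ_M(U,R). -/

import Mathlib

open Set

variable {α : Type*}

/-- The rank of a set `X` in a matroid `M`: the supremum of cardinalities of
independent subsets of `X`. -/
noncomputable def Matroid.rk' (M : Matroid α) (X : Set α) : ℕ :=
  sSup {n | ∃ I, M.Indep I ∧ I ⊆ X ∧ I.ncard = n}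

/-- The connectivity function `λ_M(X) = r(X) + r(E \ X) - r(M)`. -/
noncomputable def Matroid.lam (M : Matroid α) (X : Set α) : ℕ :=
  M.rk' X + M.rk' (M.E \ X) - M.rk' M.E

/-- The connectivity `κ_M(Q,R)` between disjoint sets `Q` and `R`. -/
noncomputable def Matroid.kappa (M : Matroid α) (Q R : Set α) : ℕ :=
  sInf {k | ∃ X, Q ⊆ X ∧ X ⊆ M.E \ R ∧ M.lam X = k}

/-- Deletion of a set of elements. -/
def Matroid.del (M : Matroid α) (D : Set α) : Matroid α := M.restrict (M.E \ D)

/-- Contraction of a set of elements, defined via duality: `M / C = (M* \ C)*`. -/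
def Matroid.con (M : Matroid α) (C : Set α) : Matroid α := (M✶.del C)✶

/-- `N` is a minor of `M` if it is obtained by contracting a set `C` and deleting a
disjoint set `D`. -/
def Matroid.IsMinorOf (N M : Matroid α) : Prop :=
  ∃ C D, C ⊆ M.E ∧ D ⊆ M.E ∧ Disjoint C D ∧ N = (M.con C).del D

/-- `e` is deletable with respect to `(Q,R)`. -/
noncomputable def Matroid.Deletable (M : Matroid α) (Q R : Set α) (e : α) : Prop :=
  (M.del {e}).kappa Q R = M.kappa Q R

/-- `e` is contractible with respect to `(Q,R)`. -/
noncomputable def Matroid.Contractible (M : Matroid α) (Q R : Set α) (e : α) : Prop :=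
  (M.con {e}).kappa Q R = M.kappa Q R

/-- `e` is flexible with respect to `(Q,R)` if it is both deletable and contractible. -/
noncomputable def Matroid.Flexible (M : Matroid α) (Q R : Set α) (e : α) : Prop :=
  M.Deletable Q R e ∧ M.Contractible Q R e

/-- The local connectivity `⊓_M(A,B) = r(A) + r(B) - r(A ∪ B)`. -/
noncomputable def Matroid.localConn (M : Matroid α) (A B : Set α) : ℕ :=
  M.rk' A + M.rk' B - M.rk' (A ∪ B)

namespace Matroid

variable {M : Matroid α} {I J X Y A B C Q R U : Set α} {e : α}

lemma indep_finite' [M.Finite] (hI : M.Indep I) : I.Finite :=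
  M.ground_finite.subset hI.subset_ground

lemma rk'_bddAbove [M.Finite] (X : Set α) :
    BddAbove {n | ∃ I, M.Indep I ∧ I ⊆ X ∧ I.ncard = n} := by
  refine ⟨M.E.ncard, ?_⟩
  rintro n ⟨I, hI, -, rfl⟩
  exact ncard_le_ncard hI.subset_ground M.ground_finite

lemma indep_ncard_le_rk' [M.Finite] (hI : M.Indep I) (hIX : I ⊆ X) :
    I.ncard ≤ M.rk' X :=
  le_csSup (rk'_bddAbove X) ⟨I, hI, hIX, rfl⟩

lemma IsBasis'.rk'_eq [M.Finite] (h : M.IsBasis' I X) : M.rk' X = I.ncard := by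
  refine le_antisymm (csSup_le ⟨0, ∅, M.empty_indep, empty_subset _, by simp⟩ ?_)
    (indep_ncard_le_rk' h.indep h.subset)
  rintro n ⟨J, hJ, hJX, rfl⟩
  obtain ⟨J', hJ', hJJ'⟩ := hJ.subset_isBasis'_of_subset hJX
  have := h.encard_eq_encard hJ'
  calc J.ncard ≤ J'.ncard := ncard_le_ncard hJJ' (indep_finite' hJ'.indep)
    _ = I.ncard := by rw [ncard_def, ← this, ← ncard_def]

lemma IsBasis.rk'_eq [M.Finite] (h : M.IsBasis I X) : M.rk' X = I.ncard :=
  h.isBasis'.rk'_eq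

lemma rk'_mono [M.Finite] (h : X ⊆ Y) : M.rk' X ≤ M.rk' Y := by
  obtain ⟨I, hI⟩ := M.exists_isBasis' X
  rw [hI.rk'_eq]
  exact indep_ncard_le_rk' hI.indep (hI.subset.trans h)

lemma rk'_le_ncard [M.Finite] (hX : X.Finite) : M.rk' X ≤ X.ncard := by
  obtain ⟨I, hI⟩ := M.exists_isBasis' X
  rw [hI.rk'_eq]
  exact ncard_le_ncard hI.subset hX

lemma base_rk' [M.Finite] (hB : M.IsBase B) : M.rk' M.E = B.ncard :=
  hB.isBasis_ground.rk'_eq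

lemma rk'_submod [M.Finite] (hA : A ⊆ M.E) (hB : B ⊆ M.E) :
    M.rk' (A ∪ B) + M.rk' (A ∩ B) ≤ M.rk' A + M.rk' B := by
  obtain ⟨I, hI⟩ := M.exists_isBasis (A ∩ B) ((inter_subset_left).trans hA)
  obtain ⟨J, hJ, hIJ⟩ := hI.indep.subset_isBasis_of_subset
    (hI.subset.trans (inter_subset_left.trans subset_union_left)) (union_subset hA hB)
  have hJfin : J.Finite := indep_finite' hJ.indep
  rw [hJ.rk'_eq, hI.rk'_eq]
  have h1 : J.ncard + I.ncard ≤ (J ∩ A).ncard + (J ∩ B).ncard := by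
    have hcup : (J ∩ A) ∪ (J ∩ B) = J := by
      rw [← inter_union_distrib_left, inter_eq_self_of_subset_left hJ.subset]
    have hcap : I ⊆ (J ∩ A) ∩ (J ∩ B) := by
      refine subset_inter (subset_inter hIJ ?_) (subset_inter hIJ ?_)
      · exact hI.subset.trans inter_subset_left
      · exact hI.subset.trans inter_subset_right
    calc J.ncard + I.ncard ≤ ((J ∩ A) ∪ (J ∩ B)).ncard + ((J ∩ A) ∩ (J ∩ B)).ncard := by
          rw [hcup]
          exact add_le_add le_rfl
            (ncard_le_ncard hcap ((hJfin.inter_of_left _).inter_of_left _))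
      _ = (J ∩ A).ncard + (J ∩ B).ncard :=
          ncard_union_add_ncard_inter _ _ (hJfin.inter_of_left _) (hJfin.inter_of_left _)
  refine h1.trans (add_le_add ?_ ?_)
  · exact indep_ncard_le_rk' (hJ.indep.subset inter_subset_left) inter_subset_right
  · exact indep_ncard_le_rk' (hJ.indep.subset inter_subset_left) inter_subset_right

lemma restrict_rk' (M : Matroid α) (R X : Set α) :
    (M.restrict R).rk' X = M.rk' (X ∩ R) := by
  unfold rk'
  congr 1
  ext n
  constructor
  · rintro ⟨I, hI, hIX, rfl⟩
    rw [restrict_indep_iff] at hI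
    exact ⟨I, hI.1, subset_inter hIX hI.2, rfl⟩
  · rintro ⟨I, hI, hIX, rfl⟩
    exact ⟨I, restrict_indep_iff.2 ⟨hI, hIX.trans inter_subset_right⟩,
      hIX.trans inter_subset_left, rfl⟩

lemma dual_rk' [M.Finite] (hX : X ⊆ M.E) :
    M✶.rk' X + M.rk' M.E = X.ncard + M.rk' (M.E \ X) := by
  have hEfin := M.ground_finite
  have hXfin := hEfin.subset hX
  refine le_antisymm ?_ ?_
  · obtain ⟨J, hJ⟩ := M✶.exists_isBasis X hX
    obtain ⟨hJE, Bb, hBb, hdisj⟩ := (dual_indep_iff_exists').1 hJ.indep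
    have hJX := hJ.subset
    rw [hJ.rk'_eq, base_rk' hBb]
    have hBfin := hEfin.subset hBb.subset_ground
    have h1 : Bb.ncard = (Bb ∩ X).ncard + (Bb \ X).ncard := by
      rw [← ncard_inter_add_ncard_diff_eq_ncard Bb X hBfin]
    have h2 : (Bb ∩ X).ncard ≤ (X \ J).ncard := by
      refine ncard_le_ncard ?_ (hXfin.diff (t := J))
      exact fun x hx => ⟨hx.2, fun hxJ => (disjoint_left.1 hdisj hxJ) hx.1⟩
    have h3 : (Bb \ X).ncard ≤ M.rk' (M.E \ X) := by
      refine indep_ncard_le_rk' (hBb.indep.subset diff_subset) ?_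
      exact diff_subset_diff_left hBb.subset_ground
    have h4 : J.ncard + (X \ J).ncard = X.ncard := by
      rw [add_comm, ncard_diff_add_ncard_of_subset hJX hXfin]
    omega
  · obtain ⟨I, hI⟩ := M.exists_isBasis (M.E \ X) diff_subset
    obtain ⟨Bb, hBb, hIB⟩ := hI.indep.exists_isBase_superset
    have hBfin := hEfin.subset hBb.subset_ground
    have hBE := hBb.subset_ground
    have hBdiff : Bb ∩ (M.E \ X) = I :=
      (hI.eq_of_subset_indep (hBb.indep.inter_right _)
        (subset_inter hIB hI.subset) inter_subset_right).symm
    have h1 : M✶.rk' X ≥ (X \ Bb).ncard := by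
      refine indep_ncard_le_rk' ?_ diff_subset
      rw [dual_indep_iff_exists']
      exact ⟨diff_subset.trans hX, Bb, hBb, disjoint_sdiff_left⟩
    have h2 : M.rk' M.E = Bb.ncard := base_rk' hBb
    have h3 : M.rk' (M.E \ X) = I.ncard := hI.rk'_eq
    have h4 : Bb.ncard = (Bb ∩ X).ncard + I.ncard := by
      rw [← hBdiff, ← ncard_inter_add_ncard_diff_eq_ncard Bb X hBfin]
      congr 2
      ext x
      exact ⟨fun h => ⟨h.1, hBE h.1, h.2⟩, fun h => ⟨h.1, h.2.2⟩⟩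
    have h5 : (X ∩ Bb).ncard + (X \ Bb).ncard = X.ncard :=
      ncard_inter_add_ncard_diff_eq_ncard X Bb hXfin
    have h6 : (X ∩ Bb).ncard = (Bb ∩ X).ncard := by rw [inter_comm]
    omega

@[simp] lemma del_ground (M : Matroid α) (D : Set α) : (M.del D).E = M.E \ D := rfl
@[simp] lemma con_ground (M : Matroid α) (C : Set α) : (M.con C).E = M.E \ C := rfl

instance del_finite [M.Finite] (D : Set α) : (M.del D).Finite :=
  ⟨M.ground_finite.subset diff_subset⟩
instance con_finite [M.Finite] (C : Set α) : (M.con C).Finite :=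
  ⟨M.ground_finite.subset diff_subset⟩

lemma del_rk' (M : Matroid α) (D X : Set α) : (M.del D).rk' X = M.rk' (X ∩ (M.E \ D)) :=
  restrict_rk' M (M.E \ D) X

lemma con_rk' [M.Finite] (hC : C ⊆ M.E) (hY : Y ⊆ M.E \ C) :
    (M.con C).rk' Y + M.rk' C = M.rk' (Y ∪ C) := by
  set P := M✶.del C with hP
  have hPfin : P.Finite := ⟨M.ground_finite.subset diff_subset⟩
  have hPE : P.E = M.E \ C := rfl
  have hEfin := M.ground_finite
  have h1 : P✶.rk' Y + P.rk' P.E = Y.ncard + P.rk' (P.E \ Y) :=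
    dual_rk' (by rw [hPE]; exact hY)
  have hPrk : ∀ Z, Z ⊆ M.E \ C → P.rk' Z = M✶.rk' Z := by
    intro Z hZ
    rw [hP, del_rk', dual_ground, inter_eq_self_of_subset_left hZ]
  rw [hPE, diff_diff] at h1
  rw [hPrk _ Subset.rfl, hPrk _ (diff_subset_diff_right subset_union_left)] at h1
  have hA : M✶.rk' (M.E \ C) + M.rk' M.E = (M.E \ C).ncard + M.rk' C := by
    have := dual_rk' (M := M) (X := M.E \ C) diff_subset
    rwa [diff_diff_cancel_left hC] at this
  have hB2 : M✶.rk' (M.E \ (C ∪ Y)) + M.rk' M.E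
      = (M.E \ (C ∪ Y)).ncard + M.rk' (C ∪ Y) := by
    have := dual_rk' (M := M) (X := M.E \ (C ∪ Y)) diff_subset
    rwa [diff_diff_cancel_left (union_subset hC (hY.trans diff_subset))] at this
  have hcard : (M.E \ (C ∪ Y)).ncard + Y.ncard = (M.E \ C).ncard := by
    rw [← diff_diff]
    exact ncard_diff_add_ncard_of_subset hY (hEfin.subset diff_subset)
  show P✶.rk' Y + M.rk' C = M.rk' (Y ∪ C)
  rw [union_comm]
  omega

lemma lam_add [M.Finite] (hX : X ⊆ M.E) :
    M.lam X + M.rk' M.E = M.rk' X + M.rk' (M.E \ X) := by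
  have h : M.rk' M.E ≤ M.rk' X + M.rk' (M.E \ X) := by
    have h1 : M.rk' M.E = M.rk' (X ∪ (M.E \ X)) := by rw [union_diff_cancel hX]
    have h2 := rk'_submod (M := M) hX (diff_subset (s := M.E) (t := X))
    omega
  show M.rk' X + M.rk' (M.E \ X) - M.rk' M.E + M.rk' M.E = _
  omega

lemma lam_submod [M.Finite] (hA : A ⊆ M.E) (hB : B ⊆ M.E) :
    M.lam (A ∪ B) + M.lam (A ∩ B) ≤ M.lam A + M.lam B := by
  have l1 := lam_add (M := M) hA
  have l2 := lam_add (M := M) hB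
  have l3 := lam_add (M := M) (union_subset hA hB)
  have l4 := lam_add (M := M) (X := A ∩ B) (inter_subset_left.trans hA)
  have s1 := rk'_submod (M := M) hA hB
  have s2 := rk'_submod (M := M) (diff_subset (s := M.E) (t := A))
    (diff_subset (s := M.E) (t := B))
  have e1 : M.E \ A ∪ M.E \ B = M.E \ (A ∩ B) := (diff_inter).symm
  have e2 : (M.E \ A) ∩ (M.E \ B) = M.E \ (A ∪ B) := by
    ext x; simp only [mem_inter_iff, mem_diff, mem_union]; tauto
  rw [e1, e2] at s2
  omega

lemma kappa_le (hQX : Q ⊆ X) (hXR : X ⊆ M.E \ R) : M.kappa Q R ≤ M.lam X :=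
  Nat.sInf_le ⟨X, hQX, hXR, rfl⟩

lemma kappa_exists (h : Q ⊆ M.E \ R) :
    ∃ X, Q ⊆ X ∧ X ⊆ M.E \ R ∧ M.lam X = M.kappa Q R :=
  Nat.sInf_mem (s := {k | ∃ X, Q ⊆ X ∧ X ⊆ M.E \ R ∧ M.lam X = k})
    ⟨M.lam (M.E \ R), M.E \ R, h, Subset.rfl, rfl⟩

end Matroid

namespace Matroid
variable {M : Matroid α} {Y : Set α} {e : α}

lemma con_lam_add [M.Finite] (he : e ∈ M.E) (hY : Y ⊆ M.E \ {e}) :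
    (M.con {e}).lam Y + M.rk' M.E + M.rk' {e}
      = M.rk' (Y ∪ {e}) + M.rk' (M.E \ Y) := by
  have hC : {e} ⊆ M.E := singleton_subset_iff.2 he
  have heY : e ∉ Y := fun h => (hY h).2 rfl
  have c0 : (M.con {e}).lam Y + (M.con {e}).rk' (M.E \ {e})
      = (M.con {e}).rk' Y + (M.con {e}).rk' ((M.E \ {e}) \ Y) := by
    have := lam_add (M := M.con {e}) (X := Y) (by rw [con_ground]; exact hY)
    simpa using this
  have c1 : (M.con {e}).rk' Y + M.rk' {e} = M.rk' (Y ∪ {e}) := con_rk' hC hY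
  have c2 : (M.con {e}).rk' (M.E \ {e}) + M.rk' {e} = M.rk' M.E := by
    have := con_rk' (M := M) hC (Y := M.E \ {e}) Subset.rfl
    rwa [diff_union_of_subset hC] at this
  have c3 : (M.con {e}).rk' ((M.E \ {e}) \ Y) + M.rk' {e} = M.rk' (M.E \ Y) := by
    have := con_rk' (M := M) hC (Y := (M.E \ {e}) \ Y) (diff_subset (t := Y))
    rwa [show ((M.E \ {e}) \ Y) ∪ {e} = M.E \ Y by
      ext x
      simp only [mem_union, mem_diff, mem_singleton_iff]
      constructor
      · rintro (⟨⟨h1, h2⟩, h3⟩ | rfl)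
        · exact ⟨h1, h3⟩
        · exact ⟨he, heY⟩
      · rintro ⟨h1, h2⟩
        by_cases hx : x = e
        · exact Or.inr hx
        · exact Or.inl ⟨⟨h1, hx⟩, h2⟩] at this
  omega

end Matroid

theorem stmt_4 (M : Matroid α) [M.Finite] (Q R U : Set α) (hQ : Q ⊆ M.E) (hR : R ⊆ M.E)
    (hU : U ⊆ M.E) (hQR : Disjoint Q R) (k : ℕ) (hk : k = M.kappa Q R)
    (hQU : Q ⊆ U) (hRU : R ⊆ M.E \ U) (hlam : M.lam U ≤ k)
    (e : α) (he : e ∈ M.E \ (U ∪ R)) (hnc : (M.con {e}).kappa Q R < k) :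
    (M.con {e}).kappa U R < M.kappa U R := by
  set N := M.con {e} with hN
  obtain ⟨heE, heUR⟩ := he
  have heU : e ∉ U := fun h => heUR (Or.inl h)
  have heR : e ∉ R := fun h => heUR (Or.inr h)
  have hUR : Disjoint U R := disjoint_left.2 fun x hx hxR => (hRU hxR).2 hx
  have hUER : U ⊆ M.E \ R := subset_diff.2 ⟨hU, hUR⟩
  -- Step 1 : κ_M(U,R) = k
  have hkU : M.kappa U R = k := by
    have hle : M.kappa U R ≤ k :=
      le_trans (Matroid.kappa_le Subset.rfl hUER) hlam
    have hge : k ≤ M.kappa U R := by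
      obtain ⟨X₀, hX₀U, hX₀R, hX₀lam⟩ := Matroid.kappa_exists (M := M) hUER
      rw [← hX₀lam, hk]
      exact Matroid.kappa_le (hQU.trans hX₀U) hX₀R
    omega
  -- Step 2 : a minimizer for (Q,R) in N
  have hQN : Q ⊆ N.E \ R := by
    rw [hN, Matroid.con_ground]
    refine subset_diff.2 ⟨subset_diff.2 ⟨hQ, ?_⟩, hQR⟩
    exact disjoint_singleton_right.2 fun h => heU (hQU h)
  obtain ⟨X, hQX, hXsub, hXlam⟩ := Matroid.kappa_exists (M := N) hQN
  rw [hN, Matroid.con_ground] at hXsub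
  have hXe : X ⊆ M.E \ {e} := hXsub.trans diff_subset
  have hXE : X ⊆ M.E := hXe.trans diff_subset
  have hXR : X ⊆ M.E \ R := by
    refine subset_diff.2 ⟨hXE, disjoint_left.2 fun x hx hxR => ?_⟩
    exact (hXsub hx).2 hxR
  have heX : e ∉ X := fun h => (hXe h).2 rfl
  have hNX : N.lam X < k := by rw [hXlam]; exact hnc
  -- Step 3 : numeric facts about X
  have a1 := Matroid.con_lam_add (M := M) heE hXe
  have a2 := Matroid.lam_add (M := M) hXE
  have a3 : k ≤ M.lam X := hk ▸ Matroid.kappa_le hQX hXR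
  have a4 : M.rk' X ≤ M.rk' (X ∪ {e}) := Matroid.rk'_mono subset_union_left
  have a5 : M.rk' {e} ≤ 1 := by
    have := Matroid.rk'_le_ncard (M := M) (finite_singleton e)
    rwa [ncard_singleton] at this
  rw [← hN] at a1
  have hre : M.rk' {e} = 1 := by omega
  have hXeq : M.rk' (X ∪ {e}) = M.rk' X := by omega
  have hlamMX : M.lam X = k := by omega
  -- Step 4 : Y = X ∪ U
  set Y := X ∪ U with hYdef
  have hYE : Y ⊆ M.E := union_subset hXE hU
  have heY : e ∉ Y := fun h => h.elim heX heU
  have hYe : Y ⊆ M.E \ {e} := subset_diff.2 ⟨hYE, disjoint_singleton_right.2 heY⟩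
  have hYfeas : Y ⊆ N.E \ R := by
    rw [hN, Matroid.con_ground]
    refine subset_diff.2 ⟨hYe, disjoint_left.2 fun x hx hxR => ?_⟩
    rcases hx with hx | hx
    · exact (hXR hx).2 hxR
    · exact (hRU hxR).2 hx
  -- r(Y ∪ e) ≤ r Y via submodularity with X ∪ {e}
  have b1 : M.rk' (Y ∪ {e}) ≤ M.rk' Y := by
    have hsub := Matroid.rk'_submod (M := M) (A := X ∪ {e}) (B := Y)
      (union_subset hXE (singleton_subset_iff.2 heE)) hYE
    have e1 : (X ∪ {e}) ∪ Y = Y ∪ {e} := by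
      ext x
      simp only [mem_union, mem_singleton_iff]
      tauto
    have e2 : (X ∪ {e}) ∩ Y = X := by
      ext x
      simp only [mem_inter_iff, mem_union, mem_singleton_iff]
      constructor
      · rintro ⟨h | rfl, h2⟩
        · exact h
        · exact absurd h2 heY
      · exact fun h => ⟨Or.inl h, Or.inl h⟩
    rw [e1, e2, hXeq] at hsub
    omega
  have b2 := Matroid.con_lam_add (M := M) heE hYe
  rw [← hN] at b2
  have b3 := Matroid.lam_add (M := M) hYE
  have b4 := Matroid.lam_submod (M := M) hXE hU
  rw [← hYdef] at b4
  have b5 : k ≤ M.lam (X ∩ U) :=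
    hk ▸ Matroid.kappa_le (subset_inter hQX hQU) (inter_subset_left.trans hXR)
  have hNY : N.lam Y < k := by omega
  have hfin : N.kappa U R ≤ N.lam Y :=
    Matroid.kappa_le subset_union_right hYfeas
  rw [hkU]
  omega
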